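/- arXiv:1905.12309 — 6 statements merged into one kernel-verified Lean document; each statement's English description precedes it below -/
import Mathlib

section
/- For N odd, the polynomial X^N - 1 in (Z/4Z)[X] is squarefree, i.e., it has no repeated monic irreducible factors. -/
open Polynomial

theorem squarefree_X_pow_sub_one (N : ℕ) (hN : Odd N) :
    Squarefree ((X : (ZMod 4)[X]) ^ N - 1) := by
  have hu : IsUnit (N : ZMod 4) := by
    rw [ZMod.isUnit_iff_coprime]
    have h2 : N.Coprime 2 := hN.coprime_two_right
    simpa using h2.pow_right 2
  have := (separable_X_pow_sub_C_unit (R := ZMod 4) 1 hu).squarefree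
  simpa using this
end

section
/- Let N be odd and let X^N - 1 = f g h be a factorization into monic polynomials in (Z/4Z)[X] with f, g, h pairwise coprime. If gcd(h, f*) = 1 and lcm(f, h*) = X^N - 1 (up to units), then g = 1. -/
open Polynomial

/-- The reciprocal polynomial `f*(X) = a₀⁻¹ X^(deg f) f(1/X)` of a polynomial over `ZMod 4`. -/
noncomputable def recip (f : (ZMod 4)[X]) : (ZMod 4)[X] :=
  C (f.coeff 0)⁻¹ * f.reverse


/-- `m` is a least common multiple of `a` and `b`. -/
def IsLcm (a b m : (ZMod 4)[X]) : Prop :=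
  a ∣ m ∧ b ∣ m ∧ ∀ c : (ZMod 4)[X], a ∣ c → b ∣ c → m ∣ c

theorem g_eq_one (N : ℕ) (hN : Odd N) (f g h : (ZMod 4)[X])
    (hf : f.Monic) (hg : g.Monic) (hh : h.Monic)
    (hfgh : f * g * h = (X : (ZMod 4)[X]) ^ N - 1)
    (hfg : IsCoprime f g) (hfh : IsCoprime f h) (hgh : IsCoprime g h)
    (hgcd : IsCoprime h (recip f))
    (hlcm : IsLcm f (recip h) ((X : (ZMod 4)[X]) ^ N - 1)) :
    g = 1 := by
  have hN1 : 1 ≤ N := hN.pos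
  have hXN : ((X : (ZMod 4)[X]) ^ N - 1).Monic := by
    have := monic_X_pow_sub_C (1 : ZMod 4) (n := N) (by omega)
    simpa using this
  haveI : Nontrivial (ZMod 4) := ⟨0, 1, by decide⟩
  have hXNdeg : ((X : (ZMod 4)[X]) ^ N - 1).natDegree = N := by
    have := natDegree_X_pow_sub_C (n := N) (r := (1 : ZMod 4))
    simpa using this
  have hXNne : ((X : (ZMod 4)[X]) ^ N - 1) ≠ 0 := hXN.ne_zero
  -- X^N - 1 divides f * recip h
  have hdvd : ((X : (ZMod 4)[X]) ^ N - 1) ∣ f * recip h :=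
    hlcm.2.2 _ ⟨recip h, rfl⟩ ⟨f, mul_comm _ _⟩
  have hrhne : recip h ≠ 0 := by
    intro h0
    have := hlcm.2.1
    rw [h0] at this
    exact hXNne (zero_dvd_iff.mp this)
  have hne : f * recip h ≠ 0 := by
    rw [Ne, hf.mul_right_eq_zero_iff]
    exact hrhne
  have hdegle : N ≤ (f * recip h).natDegree := by
    obtain ⟨c, hc⟩ := hdvd
    have hcne : c ≠ 0 := by rintro rfl; simp at hc; exact hne hc
    have := hXN.natDegree_mul' hcne
    rw [← hc] at this
    omega
  have h1 : (f * recip h).natDegree ≤ f.natDegree + h.natDegree := by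
    calc (f * recip h).natDegree ≤ f.natDegree + (recip h).natDegree :=
          natDegree_mul_le
      _ ≤ f.natDegree + h.natDegree := by
          have : (recip h).natDegree ≤ h.natDegree := by
            calc (recip h).natDegree ≤ (C (h.coeff 0)⁻¹).natDegree + h.reverse.natDegree :=
                  natDegree_mul_le
              _ ≤ h.reverse.natDegree := by simp [natDegree_C]
              _ ≤ h.natDegree := reverse_natDegree_le h
          omega
  have hsum : f.natDegree + g.natDegree + h.natDegree = N := by
    have : (f * g * h).natDegree = N := by rw [hfgh, hXNdeg]
    rw [(hf.mul hg).natDegree_mul hh, hf.natDegree_mul hg] at this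
    exact this
  have hg0 : g.natDegree = 0 := by omega
  exact hg.natDegree_eq_zero.mp hg0
end

section
/- Let N be odd and let X^N - 1 = f h be a factorization into monic coprime polynomials in (Z/4Z)[X]. If gcd(h, f*) = 1 and lcm(f, h*) = X^N - 1, then f and h are both self-reciprocal, i.e., f = f* and h = h*. -/
open Polynomial

lemma recip_monic {p : (ZMod 4)[X]} (hp : p.Monic) (hu : IsUnit (p.coeff 0)) :
    (recip p).Monic ∧ (recip p).natDegree = p.natDegree := by
  haveI : Fact (1 < 4) := ⟨by norm_num⟩
  have h0 : p.coeff 0 ≠ 0 := hu.ne_zero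
  have hp0 : p ≠ 0 := hp.ne_zero
  have htd : p.natTrailingDegree = 0 := by
    rw [natTrailingDegree_eq_zero]; exact Or.inr h0
  have hdeg : p.reverse.natDegree = p.natDegree := by
    rw [reverse_natDegree, htd, Nat.sub_zero]
  have hlc : p.reverse.leadingCoeff = p.coeff 0 := by
    rw [reverse_leadingCoeff, trailingCoeff, htd]
  have hinv : (p.coeff 0)⁻¹ * p.coeff 0 = 1 := ZMod.inv_mul_of_unit _ hu
  have hiu : IsUnit ((p.coeff 0)⁻¹) := IsUnit.of_mul_eq_one _ hinv
  have hC : (C ((p.coeff 0)⁻¹)).leadingCoeff * p.reverse.leadingCoeff = 1 := by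
    rw [leadingCoeff_C, hlc, hinv]
  constructor
  · have := natDegree_mul' (p := C ((p.coeff 0)⁻¹)) (q := p.reverse) (by rw [hC]; exact one_ne_zero)
    unfold Monic recip
    rw [leadingCoeff_mul' (by rw [hC]; exact one_ne_zero), hC]
  · rw [recip, natDegree_mul' (by rw [hC]; exact one_ne_zero), natDegree_C, zero_add, hdeg]

lemma monic_dvd_eq {p q : (ZMod 4)[X]} (hp : p.Monic) (hq : q.Monic)
    (hdvd : p ∣ q) (hdeg : q.natDegree ≤ p.natDegree) : p = q := by
  haveI : Fact (1 < 4) := ⟨by norm_num⟩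
  obtain ⟨c, rfl⟩ := hdvd
  have hc0 : c ≠ 0 := by
    rintro rfl; rw [mul_zero] at hq; exact hq.ne_zero rfl
  have hclc : c.leadingCoeff ≠ 0 := leadingCoeff_ne_zero.mpr hc0
  have hne : p.leadingCoeff * c.leadingCoeff ≠ 0 := by rwa [hp.leadingCoeff, one_mul]
  have hdeg' := natDegree_mul' hne
  have hcdeg : c.natDegree = 0 := by omega
  have hclc1 : c.leadingCoeff = 1 := by
    have := leadingCoeff_mul' hne
    rw [hq.leadingCoeff, hp.leadingCoeff, one_mul] at this
    exact this.symm
  have : c = 1 := by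
    have hc : c = C c.leadingCoeff := by
      conv_lhs => rw [eq_C_of_natDegree_eq_zero hcdeg]
      rw [Polynomial.leadingCoeff, hcdeg]
    rw [hc, hclc1, map_one]
  rw [this, mul_one]

theorem selfReciprocal_of_conditions (N : ℕ) (hN : Odd N) (f h : (ZMod 4)[X])
    (hf : f.Monic) (hh : h.Monic)
    (hfh : f * h = (X : (ZMod 4)[X]) ^ N - 1)
    (hcop : IsCoprime f h)
    (hgcd : IsCoprime h (recip f))
    (hlcm : IsLcm f (recip h) ((X : (ZMod 4)[X]) ^ N - 1)) :
    recip f = f ∧ recip h = h := by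
  haveI : Fact (1 < 4) := ⟨by norm_num⟩
  have hNne : N ≠ 0 := by rintro rfl; exact (Nat.not_odd_iff_even.mpr Even.zero) hN
  -- constant coefficients
  have hc0 : f.coeff 0 * h.coeff 0 = 3 := by
    have := congrArg (fun p => Polynomial.coeff p 0) hfh
    simp only [mul_coeff_zero, coeff_sub, coeff_X_pow, coeff_one,
      if_neg (Ne.symm hNne), if_pos rfl, zero_sub] at this
    rw [this]; decide
  have hcase : (f.coeff 0 = 1 ∧ h.coeff 0 = 3) ∨ (f.coeff 0 = 3 ∧ h.coeff 0 = 1) := by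
    revert hc0
    have : ∀ a b : ZMod 4, a * b = 3 → (a = 1 ∧ b = 3) ∨ (a = 3 ∧ b = 1) := by decide
    exact this _ _
  have hfu : IsUnit (f.coeff 0) := by
    rcases hcase with ⟨ha, _⟩ | ⟨ha, _⟩ <;> rw [ha] <;> decide
  have hhu : IsUnit (h.coeff 0) := by
    rcases hcase with ⟨_, hb⟩ | ⟨_, hb⟩ <;> rw [hb] <;> decide
  obtain ⟨hrfm, hrfd⟩ := recip_monic hf hfu
  obtain ⟨hrhm, hrhd⟩ := recip_monic hh hhu
  -- product of recips
  have hrev : (f * h).reverse = f.reverse * h.reverse :=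
    reverse_mul (by rw [hf.leadingCoeff, hh.leadingCoeff, one_mul]; exact one_ne_zero)
  have hXNd : ((X : (ZMod 4)[X]) ^ N - 1).natDegree = N := by
    have : ((X : (ZMod 4)[X]) ^ N - 1) = X ^ N + C (-1) := by
      rw [map_neg, map_one]; ring
    rw [this, natDegree_X_pow_add_C]
  have hrevXN : ((X : (ZMod 4)[X]) ^ N - 1).reverse = 1 - X ^ N := by
    rw [reverse, hXNd, reflect_sub, reflect_one]
    congr 1
    rw [reflect_monomial, revAt_le (le_refl N), Nat.sub_self, pow_zero]
  have hkey : recip f * recip h = (X : (ZMod 4)[X]) ^ N - 1 := by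
    have h33 : (3 : ZMod 4) * 3 = 1 := by decide
    have h1 : (f.coeff 0)⁻¹ * (h.coeff 0)⁻¹ * 3 = 1 := by
      rw [← hc0, show (f.coeff 0)⁻¹ * (h.coeff 0)⁻¹ * (f.coeff 0 * h.coeff 0)
          = ((f.coeff 0)⁻¹ * f.coeff 0) * ((h.coeff 0)⁻¹ * h.coeff 0) from by ring,
        ZMod.inv_mul_of_unit _ hfu, ZMod.inv_mul_of_unit _ hhu, one_mul]
    have hinv3 : (f.coeff 0)⁻¹ * (h.coeff 0)⁻¹ = 3 := by
      calc (f.coeff 0)⁻¹ * (h.coeff 0)⁻¹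
          = (f.coeff 0)⁻¹ * (h.coeff 0)⁻¹ * 3 * 3 := by rw [mul_assoc, h33, mul_one]
        _ = 3 := by rw [h1, one_mul]
    have hCmul : C ((f.coeff 0)⁻¹) * C ((h.coeff 0)⁻¹) = C 3 := by
      rw [← map_mul, hinv3]
    calc recip f * recip h
        = (C ((f.coeff 0)⁻¹) * C ((h.coeff 0)⁻¹)) * (f.reverse * h.reverse) := by
          rw [recip, recip]; ring
      _ = C 3 * (f * h).reverse := by rw [hCmul, hrev]
      _ = C 3 * (1 - X ^ N) := by rw [hfh, hrevXN]
      _ = (X : (ZMod 4)[X]) ^ N - 1 := by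
          have : (C (3 : ZMod 4)) = -1 := by
            have : (3 : ZMod 4) = -1 := by decide
            rw [this, map_neg, map_one]
          rw [this]; ring
  -- degrees
  have hfhd : f.natDegree + h.natDegree = N := by
    have := hf.natDegree_mul hh
    rw [hfh, hXNd] at this; omega
  -- h ∣ recip h
  have hdvd : h ∣ recip f * recip h := by rw [hkey, ← hfh]; exact Dvd.intro_left f rfl
  have hhdvd : h ∣ recip h := hgcd.dvd_of_dvd_mul_left hdvd
  have hheq : h = recip h := monic_dvd_eq hh hrhm hhdvd (by rw [hrhd])
  refine ⟨?_, hheq.symm⟩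
  -- cancel h
  have : recip f * h = f * h := by
    rw [hfh, ← hkey, ← hheq]
  exact hh.isRegular.right this
end

section
/- Let N be odd and let C = (f(x)) be the ideal of (Z/4Z)[X]/(X^N - 1) generated by the image of a monic self-reciprocal divisor f of X^N - 1. Then C ∩ C^⊥ = {0}, i.e., C is an LCD code. -/
open Polynomial

instance : Nontrivial (ZMod 4) := ⟨0, 1, by decide⟩

lemma monic_XpowSubOne {N : ℕ} (hN : 0 < N) :
    ((X : (ZMod 4)[X]) ^ N - 1).Monic := by
  simpa using monic_X_pow_sub_C (1 : ZMod 4) hN.ne'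

/-- The canonical representative (of degree `< N`) of an element of
`(ZMod 4)[X] ⧸ (X^N - 1)`. -/
noncomputable def rep {N : ℕ} (hN : 0 < N)
    (a : AdjoinRoot ((X : (ZMod 4)[X]) ^ N - 1)) : (ZMod 4)[X] :=
  AdjoinRoot.modByMonicHom (monic_XpowSubOne hN) a

/-- The standard bilinear form on coefficient vectors of length `N`. -/
noncomputable def innerP {N : ℕ} (hN : 0 < N)
    (a b : AdjoinRoot ((X : (ZMod 4)[X]) ^ N - 1)) : ZMod 4 :=
  ∑ i ∈ Finset.range N, (rep hN a).coeff i * (rep hN b).coeff i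

/-- The dual code of a cyclic code, i.e. of an ideal of `(ZMod 4)[X] ⧸ (X^N - 1)`,
with respect to the standard bilinear form. -/
noncomputable def dualCode {N : ℕ} (hN : 0 < N)
    (C : Ideal (AdjoinRoot ((X : (ZMod 4)[X]) ^ N - 1))) :
    Set (AdjoinRoot ((X : (ZMod 4)[X]) ^ N - 1)) :=
  {a | ∀ b ∈ C, innerP hN a b = 0}

section Aux

variable {N : ℕ}

local notation "Rq" => AdjoinRoot ((X : (ZMod 4)[X]) ^ N - 1)
local notation "rt" => AdjoinRoot.root ((X : (ZMod 4)[X]) ^ N - 1)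
local notation "mkq" => AdjoinRoot.mk ((X : (ZMod 4)[X]) ^ N - 1)

lemma degree_XpowSubOne (hN : 0 < N) : ((X : (ZMod 4)[X]) ^ N - 1).degree = N := by
  rw [show (1 : (ZMod 4)[X]) = C 1 by simp]
  exact degree_X_pow_sub_C hN 1

lemma root_pow_N : (rt) ^ N = 1 := by
  have h : mkq ((X : (ZMod 4)[X]) ^ N - 1) = 0 := AdjoinRoot.mk_self
  rw [map_sub, map_pow, AdjoinRoot.mk_X, map_one, sub_eq_zero] at h
  exact h

lemma rep_mk (hN : 0 < N) (p : (ZMod 4)[X]) :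
    rep hN (mkq p) = p %ₘ ((X : (ZMod 4)[X]) ^ N - 1) :=
  AdjoinRoot.modByMonicHom_mk _ p

lemma mk_rep (hN : 0 < N) (a : Rq) : mkq (rep hN a) = a :=
  AdjoinRoot.mk_leftInverse (monic_XpowSubOne hN) a

lemma degree_rep_lt (hN : 0 < N) (a : Rq) : (rep hN a).degree < (N : WithBot ℕ) := by
  have h : rep hN a = rep hN a %ₘ ((X : (ZMod 4)[X]) ^ N - 1) := by
    conv_lhs => rw [← mk_rep hN a, rep_mk]
  rw [h, ← degree_XpowSubOne hN]
  exact degree_modByMonic_lt _ (monic_XpowSubOne hN)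

lemma natDegree_rep_lt (hN : 0 < N) (a : Rq) : (rep hN a).natDegree < N := by
  by_cases h : rep hN a = 0
  · simpa [h] using hN
  · exact (natDegree_lt_iff_degree_lt h).mpr (degree_rep_lt hN a)

lemma rep_root_pow (hN : 0 < N) (m : ℕ) :
    rep hN ((rt) ^ m) = X ^ (m % N) := by
  have h1 : (rt) ^ m = (rt) ^ (m % N) := by
    conv_lhs => rw [← Nat.div_add_mod m N, pow_add, pow_mul, root_pow_N, one_pow, one_mul]
  have h2 : (rt) ^ (m % N) = mkq (X ^ (m % N)) := by
    rw [map_pow, AdjoinRoot.mk_X]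
  rw [h1, h2, rep_mk, (modByMonic_eq_self_iff (monic_XpowSubOne hN)).mpr]
  rw [degree_XpowSubOne hN, degree_X_pow]
  exact_mod_cast Nat.mod_lt m hN

lemma rep_zero (hN : 0 < N) : rep hN (0 : Rq) = 0 :=
  map_zero (AdjoinRoot.modByMonicHom (monic_XpowSubOne hN))

lemma rep_sum (hN : 0 < N) {ι : Type*} (s : Finset ι) (g : ι → Rq) :
    rep hN (∑ i ∈ s, g i) = ∑ i ∈ s, rep hN (g i) :=
  map_sum (AdjoinRoot.modByMonicHom (monic_XpowSubOne hN)) g s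

lemma rep_smul (hN : 0 < N) (c : ZMod 4) (a : Rq) :
    rep hN (c • a) = c • rep hN a :=
  map_smul (AdjoinRoot.modByMonicHom (monic_XpowSubOne hN)) c a

/-- expansion of an element in terms of powers of the root -/
lemma expand_eq (hN : 0 < N) (a : Rq) :
    a = ∑ i ∈ Finset.range N, (rep hN a).coeff i • (rt) ^ i := by
  conv_lhs => rw [← mk_rep hN a, ← AdjoinRoot.aeval_eq]
  exact aeval_eq_sum_range' (natDegree_rep_lt hN a) _

end Aux

section Aux2

variable {N : ℕ}

local notation "Rq" => AdjoinRoot ((X : (ZMod 4)[X]) ^ N - 1)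
local notation "rt" => AdjoinRoot.root ((X : (ZMod 4)[X]) ^ N - 1)
local notation "mkq" => AdjoinRoot.mk ((X : (ZMod 4)[X]) ^ N - 1)

/-- The "conjugation" homomorphism `x ↦ x⁻¹ = x^(N-1)`. -/
noncomputable def barHom (_hN : 0 < N) : Rq →ₐ[ZMod 4] Rq :=
  AdjoinRoot.liftAlgHom _ (Algebra.ofId (ZMod 4) Rq) ((rt) ^ (N - 1)) (by
    have h : aeval ((rt) ^ (N - 1)) ((X : (ZMod 4)[X]) ^ N - 1) = 0 := by
      rw [map_sub, map_pow, aeval_X, map_one, ← pow_mul, mul_comm, pow_mul, root_pow_N,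
        one_pow, sub_self]
    exact h)

lemma barHom_root (hN : 0 < N) : barHom hN (rt) = (rt) ^ (N - 1) := by
  unfold barHom; exact AdjoinRoot.liftAlgHom_root _ _ _ _

lemma barHom_mk (hN : 0 < N) (p : (ZMod 4)[X]) :
    barHom hN (mkq p) = aeval ((rt) ^ (N - 1)) p := by
  unfold barHom; exact AdjoinRoot.liftAlgHom_mk _ _ _ _ _

lemma mod_claim (hN : 0 < N) {i j : ℕ} (hi : i < N) (hj : j < N) :
    ((N - 1) * i + j) % N = 0 ↔ j = i := by
  haveI : NeZero N := ⟨hN.ne'⟩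
  constructor
  · intro h
    have hd := (ZMod.natCast_eq_zero_iff _ N).mpr (Nat.dvd_of_mod_eq_zero h)
    push_cast [Nat.cast_sub (by omega : 1 ≤ N)] at hd
    rw [ZMod.natCast_self] at hd
    have hji : (j : ZMod N) = (i : ZMod N) := by linear_combination hd
    have hv := congrArg ZMod.val hji
    rwa [ZMod.val_cast_of_lt hj, ZMod.val_cast_of_lt hi] at hv
  · rintro rfl
    obtain ⟨m, rfl⟩ : ∃ m, N = m + 1 := ⟨N - 1, by omega⟩
    have h1 : (m + 1 - 1) * j + j = j * (m + 1) := by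
      simp only [Nat.add_sub_cancel]; ring
    rw [h1, Nat.mul_mod_left]

lemma inner_eq (hN : 0 < N) (a b : Rq) :
    innerP hN a b = (rep hN (barHom hN a * b)).coeff 0 := by
  have ha : barHom hN a = ∑ i ∈ Finset.range N, (rep hN a).coeff i • ((rt) ^ (N - 1)) ^ i := by
    conv_lhs => rw [expand_eq hN a]
    rw [map_sum]
    exact Finset.sum_congr rfl fun i _ => by rw [map_smul, map_pow, barHom_root]
  have key : (rep hN (barHom hN a * b)).coeff 0
      = ∑ i ∈ Finset.range N, ∑ j ∈ Finset.range N,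
          (rep hN a).coeff i * (rep hN b).coeff j *
            ((X : (ZMod 4)[X]) ^ (((N - 1) * i + j) % N)).coeff 0 := by
    conv_lhs => rw [ha, Finset.sum_mul]
    rw [rep_sum, finset_sum_coeff]
    refine Finset.sum_congr rfl fun i _ => ?_
    conv_lhs => rw [expand_eq hN b, Finset.mul_sum]
    rw [rep_sum, finset_sum_coeff]
    refine Finset.sum_congr rfl fun j _ => ?_
    rw [smul_mul_smul_comm, ← pow_mul, ← pow_add, rep_smul, coeff_smul, rep_root_pow, smul_eq_mul]
  rw [key]
  show _ = ∑ i ∈ Finset.range N, ∑ j ∈ Finset.range N, _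
  rw [show innerP hN a b = ∑ i ∈ Finset.range N, (rep hN a).coeff i * (rep hN b).coeff i from rfl]
  refine Finset.sum_congr rfl fun i hi => ?_
  rw [Finset.mem_range] at hi
  have : ∀ j ∈ Finset.range N,
      (rep hN a).coeff i * (rep hN b).coeff j *
          ((X : (ZMod 4)[X]) ^ (((N - 1) * i + j) % N)).coeff 0
        = if j = i then (rep hN a).coeff i * (rep hN b).coeff j else 0 := by
    intro j hj
    rw [Finset.mem_range] at hj
    rw [coeff_X_pow]
    by_cases h : j = i
    · rw [if_pos ((mod_claim hN hi hj).mpr h).symm, if_pos h, mul_one]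
    · rw [if_neg (fun h0 => h ((mod_claim hN hi hj).mp h0.symm)), if_neg h, mul_zero]
  rw [Finset.sum_congr rfl this, Finset.sum_ite_eq' (Finset.range N) i
    (fun j => (rep hN a).coeff i * (rep hN b).coeff j), if_pos (Finset.mem_range.mpr hi)]

end Aux2

section Aux3

variable {N : ℕ}

local notation "Rq" => AdjoinRoot ((X : (ZMod 4)[X]) ^ N - 1)
local notation "rt" => AdjoinRoot.root ((X : (ZMod 4)[X]) ^ N - 1)
local notation "mkq" => AdjoinRoot.mk ((X : (ZMod 4)[X]) ^ N - 1)

lemma inner_root_pow (hN : 0 < N) (c : Rq) {j : ℕ} (hj : j < N) :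
    innerP hN c ((rt) ^ j) = (rep hN c).coeff j := by
  have h : rep hN ((rt) ^ j) = X ^ j := by
    rw [rep_root_pow hN, Nat.mod_eq_of_lt hj]
  unfold innerP
  rw [h]
  simp only [coeff_X_pow, mul_ite, mul_one, mul_zero]
  rw [Finset.sum_ite_eq' (Finset.range N) j (fun i => (rep hN c).coeff i),
    if_pos (Finset.mem_range.mpr hj)]

lemma barHom_mk_mem (hN : 0 < N) (f : (ZMod 4)[X]) (c0 : ZMod 4)
    (hrev : f.reverse = C c0 * f) :
    barHom hN (mkq f) ∈ Ideal.span {mkq f} := by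
  have hinv1 : (rt) * (rt) ^ (N - 1) = 1 := by
    rw [← pow_succ']
    rw [show N - 1 + 1 = N by omega, root_pow_N]
  letI : Invertible ((rt) ^ (N - 1)) :=
    ⟨rt, hinv1, by rw [mul_comm]; exact hinv1⟩
  have key := eval₂_reflect_mul_pow (algebraMap (ZMod 4) Rq) ((rt) ^ (N - 1))
    f.natDegree f le_rfl
  have hinvOf : ⅟((rt) ^ (N - 1)) = rt := rfl
  rw [hinvOf] at key
  rw [barHom_mk, aeval_def, ← key]
  have h2 : eval₂ (algebraMap (ZMod 4) Rq) (rt) (reflect f.natDegree f)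
      = mkq (reflect f.natDegree f) := by
    rw [← aeval_def, AdjoinRoot.aeval_eq]
  rw [h2, show reflect f.natDegree f = f.reverse from rfl, hrev, map_mul]
  exact Ideal.mul_mem_right _ _ (Ideal.mul_mem_left _ _
    (Ideal.subset_span (Set.mem_singleton _)))

end Aux3

theorem lcd_of_selfReciprocal (N : ℕ) (hN : Odd N) (f : (ZMod 4)[X])
    (hf : f.Monic) (hsr : recip f = f)
    (hdvd : f ∣ (X : (ZMod 4)[X]) ^ N - 1)
    (C : Ideal (AdjoinRoot ((X : (ZMod 4)[X]) ^ N - 1)))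
    (hC : C = Ideal.span {AdjoinRoot.mk _ f}) :
    (C : Set (AdjoinRoot ((X : (ZMod 4)[X]) ^ N - 1))) ∩ dualCode hN.pos C = {0} := by
  have hN0 : 0 < N := hN.pos
  apply Set.eq_singleton_iff_unique_mem.mpr
  constructor
  · refine ⟨C.zero_mem, fun b _ => ?_⟩
    unfold innerP
    rw [rep_zero]
    simp
  · rintro c ⟨hcC, hcD⟩
    simp only [dualCode, Set.mem_setOf_eq] at hcD
    have hcC' : c ∈ C := hcC
    rw [hC] at hcC'
    obtain ⟨r0, hr0⟩ := Ideal.mem_span_singleton'.mp hcC'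
    obtain ⟨g, hg⟩ := hdvd
    have hNu : IsUnit ((N : ZMod 4)) := by
      have h14 : N % 4 = 1 ∨ N % 4 = 3 := by obtain ⟨k, hk⟩ := hN; omega
      rw [show ((N : ZMod 4)) = ((N % 4 : ℕ) : ZMod 4) from (ZMod.natCast_mod N 4).symm]
      rcases h14 with h | h <;> rw [h]
      · simp
      · exact IsUnit.of_mul_eq_one (((3 : ℕ) : ZMod 4)) (by decide)
    have hsep : ((X : (ZMod 4)[X]) ^ N - 1).Separable := by
      simpa using separable_X_pow_sub_C_unit (R := ZMod 4) 1 hNu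
    have hcop : IsCoprime f g := Polynomial.Separable.isCoprime (by rw [← hg]; exact hsep)
    obtain ⟨u, v, huv⟩ := hcop
    have hc0 : f.coeff 0 * g.coeff 0 = -1 := by
      have h := congrArg (fun p : (ZMod 4)[X] => p.coeff 0) hg
      simp only [coeff_sub, coeff_one, coeff_X_pow, mul_coeff_zero,
        if_neg (by omega : ¬ ((0:ℕ) = N))] at h
      norm_num at h
      linear_combination -h
    have hf0 : IsUnit (f.coeff 0) :=
      IsUnit.of_mul_eq_one (-(g.coeff 0)) (by linear_combination -hc0)
    have hrev : f.reverse = Polynomial.C (f.coeff 0) * f := by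
      have h2 := congrArg (fun p => Polynomial.C (f.coeff 0) * p) hsr
      simp only [recip] at h2
      rw [← mul_assoc, ← Polynomial.C_mul, ZMod.mul_inv_of_unit _ hf0,
        Polynomial.C_1, one_mul] at h2
      exact h2
    have hbarf : barHom hN.pos (AdjoinRoot.mk _ f) ∈ C := by
      rw [hC]; exact barHom_mk_mem hN.pos f _ hrev
    have hfg0 : AdjoinRoot.mk ((X : (ZMod 4)[X]) ^ N - 1) f * AdjoinRoot.mk _ g = 0 := by
      rw [← map_mul, ← hg]; exact AdjoinRoot.mk_self
    have hone : AdjoinRoot.mk ((X : (ZMod 4)[X]) ^ N - 1) (u * f)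
        + AdjoinRoot.mk _ (v * g) = 1 := by
      rw [← map_add, huv, map_one]
    have hcvg : c * AdjoinRoot.mk _ (v * g) = 0 := by
      rw [← hr0, map_mul]
      linear_combination (r0 * AdjoinRoot.mk ((X : (ZMod 4)[X]) ^ N - 1) v) * hfg0
    have hce : c = c * AdjoinRoot.mk _ (u * f) := by
      conv_lhs => rw [← mul_one c, ← hone]
      rw [mul_add, hcvg, add_zero]
    have hbaru : barHom hN.pos (AdjoinRoot.mk _ (u * f)) ∈ C := by
      rw [map_mul, map_mul]
      exact Ideal.mul_mem_left _ _ hbarf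
    have hall : ∀ r, innerP hN.pos c r = 0 := by
      intro r
      have h1 : barHom hN.pos c
          = barHom hN.pos c * barHom hN.pos (AdjoinRoot.mk _ (u * f)) := by
        conv_lhs => rw [hce]
        rw [map_mul]
      calc innerP hN.pos c r
          = (rep hN.pos (barHom hN.pos c * r)).coeff 0 := inner_eq _ _ _
        _ = (rep hN.pos (barHom hN.pos c
              * (barHom hN.pos (AdjoinRoot.mk _ (u * f)) * r))).coeff 0 := by
            rw [← mul_assoc, ← h1]
        _ = innerP hN.pos c (barHom hN.pos (AdjoinRoot.mk _ (u * f)) * r) :=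
            (inner_eq _ _ _).symm
        _ = 0 := hcD _ (C.mul_mem_right r hbaru)
    have hcoeff : ∀ j, (rep hN.pos c).coeff j = 0 := by
      intro j
      by_cases hj : j < N
      · rw [← inner_root_pow hN.pos c hj]; exact hall _
      · exact coeff_eq_zero_of_degree_lt (lt_of_lt_of_le (degree_rep_lt hN.pos c)
          (by exact_mod_cast Nat.le_of_not_lt hj))
    have hrepc : rep hN.pos c = 0 := Polynomial.ext fun n => by rw [hcoeff n, coeff_zero]
    calc c = AdjoinRoot.mk _ (rep hN.pos c) := (mk_rep hN.pos c).symm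
      _ = 0 := by rw [hrepc, map_zero]
end

section
/- In (Z/4Z)[X] one has the factorization X^7 - 1 = (X - 1)(X^3 + 2X^2 + X - 1)(X^3 - X^2 + 2X - 1), and each of the three factors is irreducible in (Z/4Z)[X]. -/
open Polynomial

lemma zmod4_unit_of_map_ne_zero (x : ZMod 4)
    (h : ZMod.castHom (show (2:ℕ) ∣ 4 by norm_num) (ZMod 2) x ≠ 0) : IsUnit x := by
  refine IsUnit.of_mul_eq_one (a := x) x ?_
  revert h; revert x; decide

lemma zmod4_nilpotent_of_map_eq_zero (x : ZMod 4)
    (h : ZMod.castHom (show (2:ℕ) ∣ 4 by norm_num) (ZMod 2) x = 0) : IsNilpotent x := by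
  refine ⟨2, ?_⟩
  revert h; revert x; decide

lemma irreducible_of_map_irreducible (f : (ZMod 4)[X])
    (h : Irreducible (f.map (ZMod.castHom (show (2:ℕ) ∣ 4 by norm_num) (ZMod 2)))) :
    Irreducible f := by
  set g := ZMod.castHom (show (2:ℕ) ∣ 4 by norm_num) (ZMod 2)
  constructor
  · intro hu
    exact h.not_isUnit (hu.map (mapRingHom g))
  · intro a b hab
    have : IsUnit ((a.map g)) ∨ IsUnit ((b.map g)) := by
      apply h.isUnit_or_isUnit
      rw [hab, Polynomial.map_mul]
    have key : ∀ c : (ZMod 4)[X], IsUnit (c.map g) → IsUnit c := by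
      intro c hc
      rw [Polynomial.isUnit_iff_coeff_isUnit_isNilpotent]
      have hdeg : (c.map g).natDegree = 0 := natDegree_eq_zero_of_isUnit hc
      constructor
      · apply zmod4_unit_of_map_ne_zero
        intro h0
        have h1 : (c.map g).coeff 0 = 0 := by rwa [coeff_map]
        exact hc.ne_zero (by
          rw [Polynomial.eq_C_of_natDegree_eq_zero hdeg, h1, map_zero])
      · intro i hi
        apply zmod4_nilpotent_of_map_eq_zero
        have h1 : (c.map g).coeff i = 0 := by
          rw [Polynomial.eq_C_of_natDegree_eq_zero hdeg]
          exact coeff_C_ne_zero hi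
        rwa [coeff_map] at h1
    rcases this with hc | hc
    · exact Or.inl (key a hc)
    · exact Or.inr (key b hc)

theorem X_pow_seven_sub_one_factorization :
    ((X : (ZMod 4)[X]) ^ 7 - 1 =
        (X - 1) * (X ^ 3 + 2 * X ^ 2 + X - 1) * (X ^ 3 - X ^ 2 + 2 * X - 1)) ∧
      Irreducible ((X : (ZMod 4)[X]) - 1) ∧
      Irreducible ((X : (ZMod 4)[X]) ^ 3 + 2 * X ^ 2 + X - 1) ∧
      Irreducible ((X : (ZMod 4)[X]) ^ 3 - X ^ 2 + 2 * X - 1) := by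
  refine ⟨?_, ?_, ?_, ?_⟩
  · have h4 : (4 : (ZMod 4)[X]) = 0 := by
      rw [← map_ofNat (C : ZMod 4 →+* (ZMod 4)[X]) 4, show (4 : ZMod 4) = 0 from rfl, map_zero]
    linear_combination (X ^ 2 - X) * h4
  · apply irreducible_of_map_irreducible
    simp only [Polynomial.map_sub, Polynomial.map_one, map_X]
    simpa using irreducible_X_sub_C (1 : ZMod 2)
  · apply irreducible_of_map_irreducible
    simp only [Polynomial.map_add, Polynomial.map_sub, Polynomial.map_mul, Polynomial.map_pow,
      Polynomial.map_ofNat, map_X, Polynomial.map_one]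
    have hd : ((X : (ZMod 2)[X]) ^ 3 + 2 * X ^ 2 + X - 1).natDegree = 3 := by
      compute_degree!
    rw [irreducible_iff_roots_eq_zero_of_degree_le_three (by omega) (by omega)]
    rw [Multiset.eq_zero_iff_forall_notMem]
    intro x hx
    rw [mem_roots'] at hx
    have hroot := hx.2
    simp only [IsRoot, eval_sub, eval_add, eval_mul, eval_pow, eval_X, eval_one, eval_ofNat]
      at hroot
    clear hx hd
    revert x; decide
  · apply irreducible_of_map_irreducible
    simp only [Polynomial.map_add, Polynomial.map_sub, Polynomial.map_mul, Polynomial.map_pow,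
      Polynomial.map_ofNat, map_X, Polynomial.map_one]
    have hd : ((X : (ZMod 2)[X]) ^ 3 - X ^ 2 + 2 * X - 1).natDegree = 3 := by
      compute_degree!
    rw [irreducible_iff_roots_eq_zero_of_degree_le_three (by omega) (by omega)]
    rw [Multiset.eq_zero_iff_forall_notMem]
    intro x hx
    rw [mem_roots'] at hx
    have hroot := hx.2
    simp only [IsRoot, eval_sub, eval_add, eval_mul, eval_pow, eval_X, eval_one, eval_ofNat]
      at hroot
    clear hx hd
    revert x; decide
end

section
/- Let N be odd and let f, h be monic polynomials in (Z/4Z)[X] with f h = X^N - 1. If gcd(h, f*) = 1, then gcd(f, h*) = 1. -/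
open Polynomial

lemma zmod4_units (a b : ZMod 4) (h : a * b = -1) : IsUnit a ∧ IsUnit b := by
  constructor
  · exact IsUnit.of_mul_eq_one (a := a) (-b) (by rw [mul_neg, h, neg_neg])
  · exact IsUnit.of_mul_eq_one (a := b) (-a) (by rw [mul_neg, mul_comm, h, neg_neg])

lemma zmod4_inv_mul_inv (a b : ZMod 4) (h : a * b = -1) : a⁻¹ * b⁻¹ = -1 := by
  obtain ⟨ha, hb⟩ := zmod4_units a b h
  have h1 : (a⁻¹ * b⁻¹) * (a * b) = 1 := by
    have := ZMod.inv_mul_of_unit a ha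
    have := ZMod.inv_mul_of_unit b hb
    calc (a⁻¹ * b⁻¹) * (a * b) = (a⁻¹ * a) * (b⁻¹ * b) := by ring
      _ = 1 := by rw [ZMod.inv_mul_of_unit a ha, ZMod.inv_mul_of_unit b hb, mul_one]
  rw [h] at h1
  have : (a⁻¹ * b⁻¹) = (a⁻¹ * b⁻¹) * (-1) * (-1) := by ring
  rw [this, h1, one_mul]

lemma zmod4_inv_mul_self (a b : ZMod 4) (h : a * b = -1) : b⁻¹ * b = 1 :=
  ZMod.inv_mul_of_unit b (zmod4_units a b h).2

theorem coprime_recip_swap (N : ℕ) (hN : Odd N) (f h : (ZMod 4)[X])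
    (hf : f.Monic) (hh : h.Monic)
    (hfh : f * h = (X : (ZMod 4)[X]) ^ N - 1)
    (hcop : IsCoprime h (recip f)) :
    IsCoprime f (recip h) := by
  haveI : Nontrivial (ZMod 4) := ⟨0, 1, by decide⟩
  have hN0 : N ≠ 0 := by rintro rfl; exact (by norm_num : ¬ Odd 0) hN
  -- constant coefficients
  have hc0 : f.coeff 0 * h.coeff 0 = -1 := by
    have := congrArg (fun p => p.coeff 0) hfh
    simpa [mul_coeff_zero, coeff_X_pow, Ne.symm hN0] using this
  -- reverse of the product
  have hndN : ((X : (ZMod 4)[X]) ^ N - 1).natDegree = N := by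
    simpa using (natDegree_X_pow_sub_C (n := N) (r := (1 : ZMod 4)))
  have hrev : f.reverse * h.reverse = 1 - (X : (ZMod 4)[X]) ^ N := by
    rw [← reverse_mul (by simp [hf.leadingCoeff, hh.leadingCoeff]), hfh]
    rw [reverse, hndN]
    have h1 : (1 : (ZMod 4)[X]) = X ^ 0 := by simp
    rw [sub_eq_add_neg, reflect_add, reflect_neg, h1, reflect_monomial, reflect_monomial]
    simp [revAt_le (Nat.zero_le N), sub_eq_add_neg]
  -- key identity
  have key : recip f * recip h = f * h := by
    unfold recip
    have : C (f.coeff 0)⁻¹ * f.reverse * (C (h.coeff 0)⁻¹ * h.reverse)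
        = C ((f.coeff 0)⁻¹ * (h.coeff 0)⁻¹) * (f.reverse * h.reverse) := by
      rw [map_mul]; ring
    rw [this, zmod4_inv_mul_inv _ _ hc0, hrev, hfh]
    simp [mul_sub]
    ring
  -- h divides recip h
  have hdvd : h ∣ recip h :=
    hcop.dvd_of_dvd_mul_left ⟨f, by rw [key, mul_comm]⟩
  -- recip h is monic with natDegree ≤ natDegree h
  have hh0 : h.coeff 0 ≠ 0 := by
    intro h0
    rw [h0, mul_zero] at hc0
    exact (by decide : (0 : ZMod 4) ≠ -1) hc0
  have hnt : h.natTrailingDegree = 0 := natTrailingDegree_eq_zero.mpr (Or.inr hh0)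
  have htc : h.trailingCoeff = h.coeff 0 := by rw [trailingCoeff, hnt]
  have hmon : (recip h).Monic := by
    apply monic_C_mul_of_mul_leadingCoeff_eq_one
    rw [reverse_leadingCoeff, htc]
    exact zmod4_inv_mul_self _ _ hc0
  have hle : (recip h).natDegree ≤ h.natDegree := by
    calc (recip h).natDegree ≤ h.reverse.natDegree := natDegree_C_mul_le _ _
      _ ≤ h.natDegree := reverse_natDegree_le h
  -- from divisibility and degrees: recip h = h
  obtain ⟨q, hq⟩ := hdvd
  have hq0 : q.leadingCoeff ≠ 0 := by
    intro h0
    have hqz : q = 0 := leadingCoeff_eq_zero.mp h0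
    rw [hqz, mul_zero] at hq
    exact hmon.ne_zero hq
  have hql : q.leadingCoeff = 1 := by
    have hlc : (h * q).leadingCoeff = h.leadingCoeff * q.leadingCoeff :=
      leadingCoeff_mul' (by rw [hh.leadingCoeff, one_mul]; exact hq0)
    rw [← hq, hmon.leadingCoeff, hh.leadingCoeff, one_mul] at hlc
    exact hlc.symm
  have hqd : q.natDegree = 0 := by
    have hnd : (h * q).natDegree = h.natDegree + q.natDegree :=
      natDegree_mul' (by rw [hh.leadingCoeff, hql]; norm_num)
    rw [← hq] at hnd
    omega
  have hq1 : q = 1 := by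
    rw [eq_C_of_natDegree_eq_zero hqd]
    have : q.coeff 0 = q.leadingCoeff := by rw [leadingCoeff, hqd]
    rw [this, hql, map_one]
  have hrh : recip h = h := by rw [hq, hq1, mul_one]
  -- cancel h to get recip f = f
  have hrf : recip f = f := by
    have hk := key
    rw [hrh] at hk
    exact hh.isRegular.right hk
  rw [hrh]
  rw [hrf] at hcop
  exact hcop.symm
end
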